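/- arXiv:1704.00127 — 3 statements merged into one kernel-verified Lean document; each statement's English description precedes it below -/
import Mathlib

section
/- Let φ : X → Y be a measurable mapping between σ-finite measure spaces satisfying the Luzin N⁻¹-property, let 1 < p, r < ∞ and 1 ≤ s ≤ q ≤ ∞. Then φ induces a bounded composition operator C_φ : L_{r,s}(Y) → L_{p,q}(X) (i.e. f ∘ φ ∈ L_{p,q}(X) for every f ∈ L_{r,s}(Y) and ‖f ∘ φ‖_{p,q} ≤ K‖f‖_{r,s} for some constant K < ∞ independent of f) if and only if there is a constant K < ∞ such that ∫_B J_{φ⁻¹}(y) dν(y) ≤ K^p (ν(B))^{p/r} for every measurable set B ∈ 𝓑. -/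
open MeasureTheory Set ENNReal NNReal

/-- Distribution function `μ{x : |f(x)| > λ}` of a complex-valued function. -/
noncomputable def distribFn {X : Type*} [MeasurableSpace X] (μ : Measure X)
    (f : X → ℂ) (lam : ℝ) : ℝ≥0∞ :=
  μ {x | lam < ‖f x‖}

/-- The Lorentz `(p,q)`-norm, `1 < p < ∞`, `1 ≤ q ≤ ∞`, computed via the
distribution function. -/
noncomputable def lorentzNorm {X : Type*} [MeasurableSpace X] (μ : Measure X)
    (p : ℝ) (q : ℝ≥0∞) (f : X → ℂ) : ℝ≥0∞ :=
  if q = ∞ then ⨆ lam ∈ Set.Ioi (0 : ℝ), ENNReal.ofReal lam * (distribFn μ f lam) ^ (1 / p)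
  else (q * ∫⁻ lam in Set.Ioi (0 : ℝ),
      (ENNReal.ofReal lam * (distribFn μ f lam) ^ (1 / p)) ^ q.toReal /
        ENNReal.ofReal lam) ^ (1 / q.toReal)

/-- Membership in the Lorentz space `L_{p,q}`. -/
def MemLorentz {X : Type*} [MeasurableSpace X] (μ : Measure X)
    (p : ℝ) (q : ℝ≥0∞) (f : X → ℂ) : Prop :=
  Measurable f ∧ lorentzNorm μ p q f < ∞

lemma distribFn_anti {X : Type*} [MeasurableSpace X] (μ : Measure X) (f : X → ℂ) :
    Antitone (distribFn μ f) :=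
  fun _ _ hab => measure_mono (fun _ hx => lt_of_le_of_lt hab hx)

lemma distribFn_comp {X Y : Type*} [MeasurableSpace X] [MeasurableSpace Y]
    (μ : Measure X) (φ : X → Y) (f : Y → ℂ) (lam : ℝ) :
    distribFn μ (f ∘ φ) lam = μ (φ ⁻¹' {y | lam < ‖f y‖}) := rfl

lemma distribFn_indicator {X : Type*} [MeasurableSpace X] (μ : Measure X)
    (A : Set X) (lam : ℝ) (hlam : 0 ≤ lam) :
    distribFn μ (A.indicator fun _ => (1:ℂ)) lam = if lam < 1 then μ A else 0 := by
  unfold distribFn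
  split_ifs with h
  · congr 1
    ext x
    by_cases hx : x ∈ A <;> simp [Set.indicator, hx, h, not_lt.2 hlam]
  · have h1 : (1:ℝ) ≤ lam := not_lt.1 h
    convert measure_empty (μ := μ)
    ext x
    by_cases hx : x ∈ A <;>
      simp [Set.indicator, hx, not_lt.2 h1, not_lt.2 hlam]

lemma lorentzNorm_le_of_distribFn_le {X Y : Type*} [MeasurableSpace X] [MeasurableSpace Y]
    (μ : Measure X) (ν : Measure Y) (g : X → ℂ) (f : Y → ℂ) (p r : ℝ) (q : ℝ≥0∞)
    (hq : q ≠ ∞ → 0 < q.toReal) (c : ℝ≥0∞) (hc : c ≠ ∞)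
    (h : ∀ lam : ℝ, 0 < lam → (distribFn μ g lam) ^ (1/p) ≤ c * (distribFn ν f lam) ^ (1/r)) :
    lorentzNorm μ p q g ≤ c * lorentzNorm ν r q f := by
  unfold lorentzNorm
  by_cases hqtop : q = ∞
  · simp only [hqtop, if_pos rfl]
    refine iSup₂_le fun lam hlam => ?_
    calc ENNReal.ofReal lam * distribFn μ g lam ^ (1/p)
        ≤ ENNReal.ofReal lam * (c * distribFn ν f lam ^ (1/r)) :=
          mul_le_mul_right (h lam hlam) _
      _ = c * (ENNReal.ofReal lam * distribFn ν f lam ^ (1/r)) := by ring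
      _ ≤ c * ⨆ l ∈ Set.Ioi (0:ℝ), ENNReal.ofReal l * distribFn ν f l ^ (1/r) :=
          mul_le_mul_right
            (le_iSup₂ (f := fun l (_ : l ∈ Set.Ioi (0:ℝ)) =>
              ENNReal.ofReal l * distribFn ν f l ^ (1/r)) lam hlam) _
  · simp only [if_neg hqtop]
    set q' := q.toReal with hq'
    have hq'pos : 0 < q' := hq hqtop
    have key : ∀ lam : ℝ,
        (ENNReal.ofReal lam * distribFn μ g lam ^ (1/p)) ^ q' / ENNReal.ofReal lam
        ≤ c ^ q' * ((ENNReal.ofReal lam * distribFn ν f lam ^ (1/r)) ^ q' /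
            ENNReal.ofReal lam) := by
      intro lam
      rcases le_or_gt lam 0 with hl | hl
      · simp [ENNReal.ofReal_eq_zero.2 hl, ENNReal.zero_rpow_of_pos hq'pos]
      · calc (ENNReal.ofReal lam * distribFn μ g lam ^ (1/p)) ^ q' / ENNReal.ofReal lam
            ≤ (ENNReal.ofReal lam * (c * distribFn ν f lam ^ (1/r))) ^ q' /
                ENNReal.ofReal lam := by
              gcongr
              exact h lam hl
          _ = c ^ q' * ((ENNReal.ofReal lam * distribFn ν f lam ^ (1/r)) ^ q' /
                ENNReal.ofReal lam) := by
              rw [mul_left_comm, ENNReal.mul_rpow_of_nonneg _ _ hq'pos.le,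
                mul_div_assoc]
    calc (q * ∫⁻ lam in Set.Ioi (0:ℝ),
            (ENNReal.ofReal lam * distribFn μ g lam ^ (1/p)) ^ q' /
              ENNReal.ofReal lam) ^ (1/q')
        ≤ (q * ∫⁻ lam in Set.Ioi (0:ℝ),
            c ^ q' * ((ENNReal.ofReal lam * distribFn ν f lam ^ (1/r)) ^ q' /
              ENNReal.ofReal lam)) ^ (1/q') := by
          gcongr
          exact key _
      _ = (c ^ q' * (q * ∫⁻ lam in Set.Ioi (0:ℝ),
            (ENNReal.ofReal lam * distribFn ν f lam ^ (1/r)) ^ q' /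
              ENNReal.ofReal lam)) ^ (1/q') := by
          rw [lintegral_const_mul' _ _ (ENNReal.rpow_ne_top_of_nonneg hq'pos.le hc),
            mul_left_comm]
      _ = c * (q * ∫⁻ lam in Set.Ioi (0:ℝ),
            (ENNReal.ofReal lam * distribFn ν f lam ^ (1/r)) ^ q' /
              ENNReal.ofReal lam) ^ (1/q') := by
          rw [ENNReal.mul_rpow_of_nonneg _ _ (by positivity), ← ENNReal.rpow_mul,
            mul_one_div, div_self hq'pos.ne', ENNReal.rpow_one]

lemma lorentzNorm_val_le_top {Y : Type*} [MeasurableSpace Y] (ν : Measure Y) (f : Y → ℂ)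
    (r : ℝ) (l0 : ℝ) (hl0 : 0 < l0) :
    ENNReal.ofReal l0 * distribFn ν f l0 ^ (1/r) ≤ lorentzNorm ν r ∞ f := by
  rw [lorentzNorm, if_pos rfl]
  exact le_iSup₂ (f := fun l (_ : l ∈ Set.Ioi (0:ℝ)) =>
    ENNReal.ofReal l * distribFn ν f l ^ (1/r)) l0 hl0

lemma lorentzNorm_top_le {Y : Type*} [MeasurableSpace Y] (ν : Measure Y) (f : Y → ℂ)
    (r : ℝ) (hr : 0 < r) (s : ℝ≥0∞) (hs : 1 ≤ s) (hstop : s ≠ ∞) :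
    lorentzNorm ν r ∞ f ≤ 4 * lorentzNorm ν r s f := by
  have hs1 : 1 ≤ s.toReal := by
    rw [← ENNReal.toReal_one]; exact ENNReal.toReal_mono hstop hs
  set s' := s.toReal with hs'def
  have hs'pos : 0 < s' := lt_of_lt_of_le one_pos hs1
  rw [lorentzNorm, if_pos rfl, lorentzNorm, if_neg hstop]
  refine iSup₂_le fun l0 hl0 => ?_
  rw [Set.mem_Ioi] at hl0
  set D := distribFn ν f with hD
  have hDmeas : Measurable D := (distribFn_anti ν f).measurable
  have hmeas : Measurable fun lam : ℝ =>
      (ENNReal.ofReal lam * D lam ^ (1/r)) ^ s' / ENNReal.ofReal lam :=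
    ((ENNReal.measurable_ofReal.comp measurable_id |>.mul
      (hDmeas.pow_const (1/r))).pow_const s').div ENNReal.measurable_ofReal
  set I := ∫⁻ lam in Set.Ioi (0:ℝ),
      (ENNReal.ofReal lam * D lam ^ (1/r)) ^ s' / ENNReal.ofReal lam with hI
  have hsub : Set.Ioo (l0/2) l0 ⊆ Set.Ioi (0:ℝ) := fun x hx => by
    simp only [Set.mem_Ioi]; have := hx.1; simp only [Set.mem_Ioo] at hx; linarith [hx.1]
  have hIlow : (ENNReal.ofReal (l0/2) * D l0 ^ (1/r)) ^ s' / ENNReal.ofReal l0 *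
      ENNReal.ofReal (l0/2) ≤ I := by
    calc (ENNReal.ofReal (l0/2) * D l0 ^ (1/r)) ^ s' / ENNReal.ofReal l0 *
          ENNReal.ofReal (l0/2)
        = ∫⁻ _ in Set.Ioo (l0/2) l0,
            (ENNReal.ofReal (l0/2) * D l0 ^ (1/r)) ^ s' / ENNReal.ofReal l0 := by
          rw [setLIntegral_const, Real.volume_Ioo, show l0 - l0/2 = l0/2 by ring]
      _ ≤ ∫⁻ lam in Set.Ioo (l0/2) l0,
            (ENNReal.ofReal lam * D lam ^ (1/r)) ^ s' / ENNReal.ofReal lam := by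
          refine setLIntegral_mono hmeas fun lam hlam => ?_
          simp only [Set.mem_Ioo] at hlam
          gcongr <;>
            first
              | exact hlam.1.le
              | exact hlam.2.le
              | exact (one_div_pos.2 hr).le
              | exact distribFn_anti ν f hlam.2.le
      _ ≤ I := lintegral_mono_set hsub
  -- now algebra
  have hh0 : ENNReal.ofReal (l0/2) ≠ 0 := by
    simp [ENNReal.ofReal_eq_zero]; linarith
  have hhtop : ENNReal.ofReal (l0/2) ≠ ∞ := ENNReal.ofReal_ne_top
  have hA2 : ENNReal.ofReal l0 = 2 * ENNReal.ofReal (l0/2) := by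
    rw [← ENNReal.ofReal_ofNat 2, ← ENNReal.ofReal_mul (by norm_num : (0:ℝ) ≤ 2),
      show (2:ℝ) * (l0/2) = l0 by ring]
  set h := ENNReal.ofReal (l0/2) with hhdef
  set E := D l0 ^ (1/r) with hE
  have hcore : (h * E) ^ s' / ENNReal.ofReal l0 * h = h ^ s' * E ^ s' / 2 := by
    rw [ENNReal.mul_rpow_of_nonneg _ _ hs'pos.le, hA2, div_eq_mul_inv, mul_right_comm,
      ← div_eq_mul_inv, ENNReal.mul_div_mul_right _ _ hh0 hhtop]
  have hkey : (ENNReal.ofReal l0 * E) ^ s' ≤ (4:ℝ≥0∞) ^ s' * (s * I) := by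
    have h1 : (ENNReal.ofReal l0 * E) ^ s' = (2:ℝ≥0∞) ^ s' * (h ^ s' * E ^ s') := by
      rw [hA2, mul_assoc, ENNReal.mul_rpow_of_nonneg _ _ hs'pos.le,
        ENNReal.mul_rpow_of_nonneg _ _ hs'pos.le]
    have h2 : (2:ℝ≥0∞) ^ s' * (h ^ s' * E ^ s') ≤
        (4:ℝ≥0∞) ^ s' * (h ^ s' * E ^ s' / 2) := by
      have h4 : (4:ℝ≥0∞) ^ s' = (2:ℝ≥0∞) ^ s' * (2:ℝ≥0∞) ^ s' := by
        rw [← ENNReal.mul_rpow_of_nonneg _ _ hs'pos.le]; norm_num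
      rw [h4]
      have h2s : (2:ℝ≥0∞) ≤ (2:ℝ≥0∞) ^ s' := by
        calc (2:ℝ≥0∞) = (2:ℝ≥0∞) ^ (1:ℝ) := (ENNReal.rpow_one 2).symm
          _ ≤ (2:ℝ≥0∞) ^ s' := ENNReal.rpow_le_rpow_of_exponent_le (by norm_num) hs1
      calc (2:ℝ≥0∞) ^ s' * (h ^ s' * E ^ s')
          = (2:ℝ≥0∞) ^ s' * (2 * (h ^ s' * E ^ s' / 2)) := by
            rw [ENNReal.mul_div_cancel' (by norm_num) (by norm_num)]
        _ ≤ (2:ℝ≥0∞) ^ s' * ((2:ℝ≥0∞) ^ s' * (h ^ s' * E ^ s' / 2)) := by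
            gcongr
        _ = (2:ℝ≥0∞) ^ s' * (2:ℝ≥0∞) ^ s' * (h ^ s' * E ^ s' / 2) := by ring
    calc (ENNReal.ofReal l0 * E) ^ s'
        = (2:ℝ≥0∞) ^ s' * (h ^ s' * E ^ s') := h1
      _ ≤ (4:ℝ≥0∞) ^ s' * (h ^ s' * E ^ s' / 2) := h2
      _ = (4:ℝ≥0∞) ^ s' * ((h * E) ^ s' / ENNReal.ofReal l0 * h) := by rw [hcore]
      _ ≤ (4:ℝ≥0∞) ^ s' * I := mul_le_mul_right hIlow _
      _ ≤ (4:ℝ≥0∞) ^ s' * (s * I) := mul_le_mul_right (le_mul_of_one_le_left' hs) _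
  calc ENNReal.ofReal l0 * E
      = ((ENNReal.ofReal l0 * E) ^ s') ^ (1/s') := by
        rw [← ENNReal.rpow_mul, mul_one_div, div_self hs'pos.ne', ENNReal.rpow_one]
    _ ≤ ((4:ℝ≥0∞) ^ s' * (s * I)) ^ (1/s') :=
        ENNReal.rpow_le_rpow hkey (by positivity)
    _ = 4 * (s * I) ^ (1/s') := by
        rw [ENNReal.mul_rpow_of_nonneg _ _ (by positivity), ← ENNReal.rpow_mul,
          mul_one_div, div_self hs'pos.ne', ENNReal.rpow_one]

lemma lorentzNorm_embed {Y : Type*} [MeasurableSpace Y] (ν : Measure Y) (f : Y → ℂ)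
    (r : ℝ) (hr : 0 < r) (s q : ℝ≥0∞) (hs : 1 ≤ s) (hsq : s ≤ q) (hq : q ≠ ∞) :
    lorentzNorm ν r q f ≤
      (q * 4 ^ (q.toReal - s.toReal)) ^ (1/q.toReal) * lorentzNorm ν r s f := by
  have hstop : s ≠ ∞ := (lt_of_le_of_lt hsq (lt_top_iff_ne_top.2 hq)).ne
  have hs1 : 1 ≤ s.toReal := by
    rw [← ENNReal.toReal_one]; exact ENNReal.toReal_mono hstop hs
  have hq1 : 1 ≤ q.toReal := by
    rw [← ENNReal.toReal_one]; exact ENNReal.toReal_mono hq (le_trans hs hsq)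
  set s' := s.toReal with hs'def
  set q' := q.toReal with hq'def
  have hs'pos : 0 < s' := lt_of_lt_of_le one_pos hs1
  have hq'pos : 0 < q' := lt_of_lt_of_le one_pos hq1
  have hs'q' : s' ≤ q' := ENNReal.toReal_mono hq hsq
  have hC0 : (q * 4 ^ (q' - s')) ^ (1/q') ≠ 0 := by
    refine (ENNReal.rpow_pos ?_ ?_).ne'
    · exact ENNReal.mul_pos (lt_of_lt_of_le zero_lt_one (le_trans hs hsq)).ne'
        (ENNReal.rpow_pos (by norm_num) (by norm_num)).ne'
    · exact ENNReal.mul_ne_top hq (ENNReal.rpow_ne_top_of_nonneg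
        (sub_nonneg.2 hs'q') (by norm_num))
  by_cases hNs : lorentzNorm ν r s f = ∞
  · rw [hNs, ENNReal.mul_top hC0]; exact le_top
  set Ns := lorentzNorm ν r s f with hNsdef
  set M := lorentzNorm ν r ∞ f with hMdef
  have hM4 : M ≤ 4 * Ns := lorentzNorm_top_le ν f r hr s hs hstop
  have hMtop : M ≠ ∞ :=
    ne_top_of_le_ne_top (ENNReal.mul_ne_top (by norm_num) hNs) hM4
  set D := distribFn ν f with hD
  have hpt : ∀ lam : ℝ,
      (ENNReal.ofReal lam * D lam ^ (1/r)) ^ q' / ENNReal.ofReal lam ≤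
        M ^ (q' - s') *
          ((ENNReal.ofReal lam * D lam ^ (1/r)) ^ s' / ENNReal.ofReal lam) := by
    intro lam
    rcases le_or_gt lam 0 with hl | hl
    · simp [ENNReal.ofReal_eq_zero.2 hl, ENNReal.zero_rpow_of_pos hq'pos]
    · have hG : (ENNReal.ofReal lam * D lam ^ (1/r)) ^ q' =
          (ENNReal.ofReal lam * D lam ^ (1/r)) ^ (q' - s') *
            (ENNReal.ofReal lam * D lam ^ (1/r)) ^ s' := by
        rw [← ENNReal.rpow_add_of_nonneg _ _ (sub_nonneg.2 hs'q') hs'pos.le,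
          sub_add_cancel]
      rw [hG, mul_div_assoc]
      refine mul_le_mul' ?_ le_rfl
      exact ENNReal.rpow_le_rpow (lorentzNorm_val_le_top ν f r lam hl)
        (sub_nonneg.2 hs'q')
  set Is := ∫⁻ lam in Set.Ioi (0:ℝ),
      (ENNReal.ofReal lam * D lam ^ (1/r)) ^ s' / ENNReal.ofReal lam with hIs
  have hNs_pow : Ns ^ s' = s * Is := by
    rw [hNsdef, lorentzNorm, if_neg hstop, ← hs'def, ← hD, ← hIs,
      ← ENNReal.rpow_mul, one_div_mul_cancel hs'pos.ne', ENNReal.rpow_one]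
  have hIsNs : Is ≤ Ns ^ s' := by
    rw [hNs_pow]
    exact le_mul_of_one_le_left' hs
  rw [lorentzNorm, if_neg hq]
  calc (q * ∫⁻ lam in Set.Ioi (0:ℝ),
          (ENNReal.ofReal lam * D lam ^ (1/r)) ^ q' / ENNReal.ofReal lam) ^ (1/q')
      ≤ (q * ∫⁻ lam in Set.Ioi (0:ℝ), M ^ (q' - s') *
          ((ENNReal.ofReal lam * D lam ^ (1/r)) ^ s' / ENNReal.ofReal lam)) ^ (1/q') := by
        gcongr
        exact hpt _
    _ = (q * (M ^ (q' - s') * Is)) ^ (1/q') := by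
        rw [lintegral_const_mul' _ _
          (ENNReal.rpow_ne_top_of_nonneg (sub_nonneg.2 hs'q') hMtop)]
    _ ≤ (q * ((4 * Ns) ^ (q' - s') * Ns ^ s')) ^ (1/q') := by
        gcongr <;> first
          | exact sub_nonneg.2 hs'q'
          | exact hM4
          | exact hIsNs
    _ = ((q * 4 ^ (q' - s')) * Ns ^ q') ^ (1/q') := by
        rw [ENNReal.mul_rpow_of_nonneg _ _ (sub_nonneg.2 hs'q'), mul_assoc,
          ← ENNReal.rpow_add_of_nonneg _ _ (sub_nonneg.2 hs'q') hs'pos.le,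
          sub_add_cancel, mul_assoc]
    _ = (q * 4 ^ (q' - s')) ^ (1/q') * Ns := by
        rw [ENNReal.mul_rpow_of_nonneg _ _ (by positivity), ← ENNReal.rpow_mul,
          mul_one_div, div_self hq'pos.ne', ENNReal.rpow_one]

lemma lorentzNorm_indicator_top_le {Y : Type*} [MeasurableSpace Y] (ν : Measure Y)
    (B : Set Y) (r : ℝ) (hr : 0 < r) :
    lorentzNorm ν r ∞ (B.indicator fun _ => (1:ℂ)) ≤ (ν B) ^ (1/r) := by
  rw [lorentzNorm, if_pos rfl]
  refine iSup₂_le fun lam hlam => ?_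
  rw [Set.mem_Ioi] at hlam
  rw [distribFn_indicator ν B lam hlam.le]
  rcases lt_or_ge lam 1 with h1 | h1
  · rw [if_pos h1]
    calc ENNReal.ofReal lam * ν B ^ (1/r) ≤ 1 * ν B ^ (1/r) :=
        mul_le_mul' (ENNReal.ofReal_le_one.2 h1.le) le_rfl
      _ = ν B ^ (1/r) := one_mul _
  · rw [if_neg (not_lt.2 h1), ENNReal.zero_rpow_of_pos (one_div_pos.2 hr), mul_zero]
    exact zero_le

lemma lorentzNorm_indicator_le {Y : Type*} [MeasurableSpace Y] (ν : Measure Y)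
    (B : Set Y) (r : ℝ) (hr : 0 < r) (s : ℝ≥0∞) (hs : 1 ≤ s) (hstop : s ≠ ∞) :
    lorentzNorm ν r s (B.indicator fun _ => (1:ℂ)) ≤
      s ^ (1/s.toReal) * (ν B) ^ (1/r) := by
  have hs1 : 1 ≤ s.toReal := by
    rw [← ENNReal.toReal_one]; exact ENNReal.toReal_mono hstop hs
  set s' := s.toReal with hs'def
  have hs'pos : 0 < s' := lt_of_lt_of_le one_pos hs1
  rw [lorentzNorm, if_neg hstop, ← hs'def]
  set c := ((ν B) ^ (1/r)) ^ s' with hc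
  have hbound : ∀ lam : ℝ, lam ∈ Set.Ioi (0:ℝ) →
      (ENNReal.ofReal lam * distribFn ν (B.indicator fun _ => (1:ℂ)) lam ^ (1/r)) ^ s' /
        ENNReal.ofReal lam ≤ (Set.Ioo (0:ℝ) 1).indicator (fun _ => c) lam := by
    intro lam hlam
    rw [Set.mem_Ioi] at hlam
    rw [distribFn_indicator ν B lam hlam.le]
    rcases lt_or_ge lam 1 with h1 | h1
    · rw [if_pos h1, Set.indicator_of_mem (Set.mem_Ioo.2 ⟨hlam, h1⟩)]
      have hA0 : ENNReal.ofReal lam ≠ 0 := by simp [ENNReal.ofReal_eq_zero]; linarith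
      rw [ENNReal.mul_rpow_of_nonneg _ _ hs'pos.le,
        ENNReal.div_le_iff hA0 ENNReal.ofReal_ne_top]
      calc ENNReal.ofReal lam ^ s' * ((ν B) ^ (1/r)) ^ s'
          ≤ ENNReal.ofReal lam ^ (1:ℝ) * ((ν B) ^ (1/r)) ^ s' :=
            mul_le_mul' (ENNReal.rpow_le_rpow_of_exponent_ge
              (ENNReal.ofReal_le_one.2 h1.le) hs1) le_rfl
        _ = c * ENNReal.ofReal lam := by rw [ENNReal.rpow_one, mul_comm]
    · rw [if_neg (not_lt.2 h1), ENNReal.zero_rpow_of_pos (one_div_pos.2 hr), mul_zero,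
        ENNReal.zero_rpow_of_pos hs'pos]
      simp
  have hInt : (∫⁻ lam in Set.Ioi (0:ℝ),
      (ENNReal.ofReal lam * distribFn ν (B.indicator fun _ => (1:ℂ)) lam ^ (1/r)) ^ s' /
        ENNReal.ofReal lam) ≤ c := by
    calc (∫⁻ lam in Set.Ioi (0:ℝ),
        (ENNReal.ofReal lam * distribFn ν (B.indicator fun _ => (1:ℂ)) lam ^ (1/r)) ^ s' /
          ENNReal.ofReal lam)
        ≤ ∫⁻ lam in Set.Ioi (0:ℝ), (Set.Ioo (0:ℝ) 1).indicator (fun _ => c) lam :=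
          setLIntegral_mono (measurable_const.indicator measurableSet_Ioo) hbound
      _ ≤ ∫⁻ lam, (Set.Ioo (0:ℝ) 1).indicator (fun _ => c) lam :=
          setLIntegral_le_lintegral _ _
      _ = c * volume (Set.Ioo (0:ℝ) 1) :=
          lintegral_indicator_const measurableSet_Ioo c
      _ = c := by rw [Real.volume_Ioo]; norm_num
  calc (s * ∫⁻ lam in Set.Ioi (0:ℝ),
        (ENNReal.ofReal lam * distribFn ν (B.indicator fun _ => (1:ℂ)) lam ^ (1/r)) ^ s' /
          ENNReal.ofReal lam) ^ (1/s')
      ≤ (s * c) ^ (1/s') := by gcongr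
    _ = s ^ (1/s') * (ν B) ^ (1/r) := by
        rw [ENNReal.mul_rpow_of_nonneg _ _ (by positivity), hc, ← ENNReal.rpow_mul,
          mul_one_div, div_self hs'pos.ne', ENNReal.rpow_one]

lemma distribFn_half_le {X : Type*} [MeasurableSpace X] (μ : Measure X) (f : X → ℂ)
    (p : ℝ) (hp : 0 < p) (q : ℝ≥0∞) (hq : 1 ≤ q) :
    distribFn μ f (1/2) ^ (1/p) ≤ 8 * lorentzNorm μ p q f := by
  have h2 : ENNReal.ofReal (1/2) = 2⁻¹ := by
    rw [ENNReal.ofReal_div_of_pos (by norm_num)]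
    norm_num [ENNReal.div_eq_inv_mul]
  have hval : ENNReal.ofReal (1/2) * distribFn μ f (1/2) ^ (1/p) ≤
      lorentzNorm μ p ∞ f := lorentzNorm_val_le_top μ f p (1/2) (by norm_num)
  have hv2 : distribFn μ f (1/2) ^ (1/p) ≤ 2 * lorentzNorm μ p ∞ f := by
    calc distribFn μ f (1/2) ^ (1/p)
        = 2 * (ENNReal.ofReal (1/2) * distribFn μ f (1/2) ^ (1/p)) := by
          rw [h2, ← mul_assoc, ENNReal.mul_inv_cancel (by norm_num) (by norm_num), one_mul]
      _ ≤ 2 * lorentzNorm μ p ∞ f := mul_le_mul_right hval _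
  by_cases hqtop : q = ∞
  · rw [hqtop]
    calc distribFn μ f (1/2) ^ (1/p) ≤ 2 * lorentzNorm μ p ∞ f := hv2
      _ ≤ 8 * lorentzNorm μ p ∞ f := mul_le_mul_left (by norm_num) _
  · calc distribFn μ f (1/2) ^ (1/p) ≤ 2 * lorentzNorm μ p ∞ f := hv2
      _ ≤ 2 * (4 * lorentzNorm μ p q f) :=
          mul_le_mul_right (lorentzNorm_top_le μ f p hp q hq hqtop) _
      _ = 8 * lorentzNorm μ p q f := by ring

/-- A measurable mapping `φ` with the Luzin `N⁻¹`-property induces a bounded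
composition operator `C_φ : L_{r,s}(Y) → L_{p,q}(X)` (for `s ≤ q`) iff
`∫_B J_{φ⁻¹} dν ≤ K^p (ν B)^{p/r}` for all measurable `B` and some constant `K`. -/
theorem boundedCompositionOperator_iff
    {X Y : Type*} [MeasurableSpace X] [MeasurableSpace Y]
    (μ : Measure X) (ν : Measure Y) [SigmaFinite μ] [SigmaFinite ν]
    (φ : X → Y) (hφ : Measurable φ)
    (hN : ∀ S : Set Y, MeasurableSet S → ν S = 0 → μ (φ ⁻¹' S) = 0)
    (p r : ℝ) (hp : 1 < p) (hr : 1 < r)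
    (s q : ℝ≥0∞) (hs : 1 ≤ s) (hsq : s ≤ q)
    (J : Y → ℝ≥0∞) (hJmeas : Measurable J)
    (hJ : ∀ E : Set Y, MeasurableSet E → μ (φ ⁻¹' E) = ∫⁻ y in E, J y ∂ν) :
    (∃ K : ℝ≥0, (∀ f : Y → ℂ, MemLorentz ν r s f → MemLorentz μ p q (f ∘ φ)) ∧
        ∀ f : Y → ℂ, MemLorentz ν r s f →
          lorentzNorm μ p q (f ∘ φ) ≤ (K : ℝ≥0∞) * lorentzNorm ν r s f) ↔
      (∃ K : ℝ≥0, ∀ B : Set Y, MeasurableSet B →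
        ∫⁻ y in B, J y ∂ν ≤ (K : ℝ≥0∞) ^ p * (ν B) ^ (p / r)) := by
  have hp0 : 0 < p := lt_trans one_pos hp
  have hr0 : 0 < r := lt_trans one_pos hr
  have hq1 : 1 ≤ q := le_trans hs hsq
  constructor
  · rintro ⟨K, _, hK⟩
    set Cu : ℝ≥0∞ := if s = ∞ then 1 else s ^ (1/s.toReal) with hCu
    have hCune : Cu ≠ ∞ := by
      rw [hCu]
      split_ifs with h
      · exact one_ne_top
      · exact ENNReal.rpow_ne_top_of_nonneg
          (by positivity) h
    set K1 : ℝ≥0∞ := 8 * (K : ℝ≥0∞) * Cu with hK1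
    have hK1ne : K1 ≠ ∞ :=
      ENNReal.mul_ne_top (ENNReal.mul_ne_top (by norm_num) ENNReal.coe_ne_top) hCune
    refine ⟨K1.toNNReal + 1, fun B hB => ?_⟩
    have hK1le : K1 ≤ ((K1.toNNReal + 1 : ℝ≥0) : ℝ≥0∞) := by
      push_cast
      rw [ENNReal.coe_toNNReal hK1ne]
      exact le_self_add
    by_cases hνB : ν B = ∞
    · have h1 : (ν B) ^ (p/r) = ∞ := by
        rw [hνB]; exact ENNReal.top_rpow_of_pos (by positivity)
      have h2 : (((K1.toNNReal + 1 : ℝ≥0)) : ℝ≥0∞) ^ p ≠ 0 := by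
        refine (ENNReal.rpow_pos ?_ ENNReal.coe_ne_top).ne'
        simp
      rw [h1, ENNReal.mul_top h2]
      exact le_top
    · set f : Y → ℂ := B.indicator fun _ => (1:ℂ) with hf
      have hfm : Measurable f := measurable_const.indicator hB
      have hnormf : lorentzNorm ν r s f ≤ Cu * (ν B) ^ (1/r) := by
        rw [hCu]
        by_cases hstop : s = ∞
        · rw [if_pos hstop, hstop, one_mul]
          exact lorentzNorm_indicator_top_le ν B r hr0
        · rw [if_neg hstop]
          exact lorentzNorm_indicator_le ν B r hr0 s hs hstop
      have hmem : MemLorentz ν r s f := by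
        refine ⟨hfm, lt_of_le_of_lt hnormf ?_⟩
        exact ENNReal.mul_lt_top hCune.lt_top
          (ENNReal.rpow_ne_top_of_nonneg (by positivity) hνB).lt_top
      have hcomp : f ∘ φ = (φ ⁻¹' B).indicator fun _ => (1:ℂ) := by
        funext x
        by_cases h : φ x ∈ B <;>
          simp [hf, Function.comp, Set.indicator, h, Set.mem_preimage]
      have hDcomp : distribFn μ (f ∘ φ) (1/2) = μ (φ ⁻¹' B) := by
        rw [hcomp, distribFn_indicator μ _ _ (by norm_num), if_pos (by norm_num)]
      have hchain : (μ (φ ⁻¹' B)) ^ (1/p) ≤ K1 * (ν B) ^ (1/r) := by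
        calc (μ (φ ⁻¹' B)) ^ (1/p)
            = distribFn μ (f ∘ φ) (1/2) ^ (1/p) := by rw [hDcomp]
          _ ≤ 8 * lorentzNorm μ p q (f ∘ φ) := distribFn_half_le μ (f ∘ φ) p hp0 q hq1
          _ ≤ 8 * ((K : ℝ≥0∞) * lorentzNorm ν r s f) := mul_le_mul_right (hK f hmem) _
          _ ≤ 8 * ((K : ℝ≥0∞) * (Cu * (ν B) ^ (1/r))) :=
              mul_le_mul_right (mul_le_mul_right hnormf _) _
          _ = K1 * (ν B) ^ (1/r) := by rw [hK1]; ring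
      have hraise : μ (φ ⁻¹' B) ≤ K1 ^ p * (ν B) ^ (p/r) := by
        calc μ (φ ⁻¹' B)
            = ((μ (φ ⁻¹' B)) ^ (1/p)) ^ p := by
              rw [← ENNReal.rpow_mul, one_div_mul_cancel hp0.ne', ENNReal.rpow_one]
          _ ≤ (K1 * (ν B) ^ (1/r)) ^ p := ENNReal.rpow_le_rpow hchain hp0.le
          _ = K1 ^ p * (ν B) ^ (p/r) := by
              rw [ENNReal.mul_rpow_of_nonneg _ _ hp0.le, ← ENNReal.rpow_mul,
                show (1/r) * p = p/r by ring]
      rw [← hJ B hB]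
      refine le_trans hraise ?_
      gcongr
  · rintro ⟨K, hK⟩
    set C : ℝ≥0∞ := if q = ∞ then (if s = ∞ then 1 else 4)
      else (q * 4 ^ (q.toReal - s.toReal)) ^ (1/q.toReal) with hC
    have hCne : C ≠ ∞ := by
      rw [hC]
      split_ifs with h1 h2
      · exact one_ne_top
      · norm_num
      · refine ENNReal.rpow_ne_top_of_nonneg ?_ (ENNReal.mul_ne_top h1
          (ENNReal.rpow_ne_top_of_nonneg (sub_nonneg.2 (ENNReal.toReal_mono h1 hsq))
            (by norm_num)))
        positivity
    have hembed : ∀ g : Y → ℂ, lorentzNorm ν r q g ≤ C * lorentzNorm ν r s g := by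
      intro g
      rw [hC]
      by_cases hqtop : q = ∞
      · rw [if_pos hqtop]
        by_cases hstop : s = ∞
        · rw [if_pos hstop, hqtop, hstop, one_mul]
        · rw [if_neg hstop, hqtop]
          exact lorentzNorm_top_le ν g r hr0 s hs hstop
      · rw [if_neg hqtop]
        exact lorentzNorm_embed ν g r hr0 s q hs hsq hqtop
    set K1 : ℝ≥0∞ := (K : ℝ≥0∞) * C with hK1
    have hK1ne : K1 ≠ ∞ := ENNReal.mul_ne_top ENNReal.coe_ne_top hCne
    have hqfun : q ≠ ∞ → 0 < q.toReal := fun h => by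
      have : 1 ≤ q.toReal := by
        rw [← ENNReal.toReal_one]; exact ENNReal.toReal_mono h hq1
      linarith
    have main : ∀ g : Y → ℂ, MemLorentz ν r s g →
        lorentzNorm μ p q (g ∘ φ) ≤ K1 * lorentzNorm ν r s g := by
      intro g hg
      have habs : Measurable fun y => ‖g y‖ := by
        exact hg.1.norm
      have hpt : ∀ lam : ℝ, 0 < lam →
          distribFn μ (g ∘ φ) lam ^ (1/p) ≤ (K : ℝ≥0∞) * distribFn ν g lam ^ (1/r) := by
        intro lam _
        have hS : MeasurableSet {y | lam < ‖g y‖} :=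
          measurableSet_lt measurable_const habs
        have h1 : distribFn μ (g ∘ φ) lam ≤
            (K : ℝ≥0∞) ^ p * (distribFn ν g lam) ^ (p/r) := by
          rw [distribFn_comp, hJ _ hS]
          exact hK _ hS
        calc distribFn μ (g ∘ φ) lam ^ (1/p)
            ≤ ((K : ℝ≥0∞) ^ p * (distribFn ν g lam) ^ (p/r)) ^ (1/p) :=
              ENNReal.rpow_le_rpow h1 (by positivity)
          _ = (K : ℝ≥0∞) * distribFn ν g lam ^ (1/r) := by
              rw [ENNReal.mul_rpow_of_nonneg _ _ (by positivity), ← ENNReal.rpow_mul,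
                ← ENNReal.rpow_mul, mul_one_div, div_self hp0.ne', ENNReal.rpow_one,
                show (p/r) * (1/p) = 1/r by field_simp]
      calc lorentzNorm μ p q (g ∘ φ)
          ≤ (K : ℝ≥0∞) * lorentzNorm ν r q g :=
            lorentzNorm_le_of_distribFn_le μ ν (g ∘ φ) g p r q hqfun _
              ENNReal.coe_ne_top hpt
        _ ≤ (K : ℝ≥0∞) * (C * lorentzNorm ν r s g) := mul_le_mul_right (hembed g) _
        _ = K1 * lorentzNorm ν r s g := by rw [hK1, mul_assoc]
    refine ⟨K1.toNNReal, fun g hg => ⟨hg.1.comp hφ, ?_⟩, fun g hg => ?_⟩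
    · refine lt_of_le_of_lt (main g hg) ?_
      exact ENNReal.mul_lt_top hK1ne.lt_top hg.2
    · rw [ENNReal.coe_toNNReal hK1ne]
      exact main g hg
end

section
/- Let φ : X → Y be a measurable mapping between σ-finite measure spaces, 1 < p, r < ∞ and 1 ≤ s ≤ q ≤ ∞. If K < ∞ is a constant such that (μ(φ⁻¹(B)))^{1/p} ≤ K (ν(B))^{1/r} for every measurable set B ∈ 𝓑, then for every f ∈ L_{r,s}(Y) the composition satisfies ‖f ∘ φ‖_{p,q} ≤ K‖f‖_{r,s}. -/
open MeasureTheory Set ENNReal NNReal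

open Filter in
private lemma lemC (ρ : Measure ℝ) [IsFiniteMeasure ρ]
    (hatom : ∀ x : ℝ, ρ {x} = 0) (hsupp : ρ (Set.Iic 0) = 0) {c : ℝ} (hc : 1 ≤ c) :
    ENNReal.ofReal c * ∫⁻ t, (ρ (Set.Iio t)) ^ (c - 1) ∂ρ ≤ (ρ Set.univ) ^ c := by
  rcases eq_or_lt_of_le hc with hc1 | hc1
  · simp [← hc1]
  by_cases hA0 : ρ Set.univ = 0
  · have : ρ = 0 := Measure.measure_univ_eq_zero.mp hA0
    simp [this]
  set A' : ℝ := (ρ Set.univ).toReal with hA'def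
  have hfin : ρ Set.univ ≠ ∞ := measure_ne_top ρ _
  have hA'pos : 0 < A' := ENNReal.toReal_pos hA0 hfin
  set G : ℝ → ℝ := fun t => (ρ (Set.Iio t)).toReal with hGdef
  have hGmono : Monotone G := fun a b hab =>
    ENNReal.toReal_mono (measure_ne_top _ _) (measure_mono (Set.Iio_subset_Iio hab))
  have hGle : ∀ t, G t ≤ A' :=
    fun t => ENNReal.toReal_mono hfin (measure_mono (Set.subset_univ _))
  -- rewrite integrand via toReal
  have step1 : ∫⁻ t, (ρ (Set.Iio t)) ^ (c - 1) ∂ρ = ∫⁻ t, ENNReal.ofReal (G t ^ (c - 1)) ∂ρ := by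
    apply lintegral_congr
    intro t
    rw [← ENNReal.ofReal_rpow_of_nonneg ENNReal.toReal_nonneg (by linarith),
      ENNReal.ofReal_toReal (measure_ne_top _ _)]
  have hGmeas : AEMeasurable G ρ := (hGmono.measurable).aemeasurable
  have key := lintegral_rpow_eq_lintegral_meas_lt_mul ρ
    (Filter.Eventually.of_forall (fun t => ENNReal.toReal_nonneg : ∀ t, 0 ≤ G t)) hGmeas
    (show (0:ℝ) < c - 1 by linarith)
  -- upper bound on the level-set measures
  have hub : ∀ y : ℝ, 0 < y → ρ {a | y < G a} ≤ ENNReal.ofReal (A' - y) := by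
    intro y hy
    by_cases hne : {a : ℝ | y < G a}.Nonempty
    · have hSsub : {a : ℝ | y < G a} ⊆ Set.Ioi (0:ℝ) := by
        intro t ht
        by_contra h
        simp only [Set.mem_Ioi, not_lt] at h
        have h0 : ρ (Set.Iio t) = 0 :=
          le_antisymm (le_trans (measure_mono (Set.Iio_subset_Iic_self.trans
            (Set.Iic_subset_Iic.mpr h))) hsupp.le) zero_le
        have : G t = 0 := by simp [hGdef, h0]
        have := ht
        simp only [Set.mem_setOf_eq] at this
        rw [‹G t = 0›] at this
        linarith
      have hbdd : BddBelow {a : ℝ | y < G a} := ⟨0, fun t ht => (hSsub ht).le⟩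
      set b := sInf {a : ℝ | y < G a} with hbdef
      have hS_up : {a : ℝ | y < G a} ⊆ Set.Ici b := fun t ht => csInf_le hbdd ht
      have h1 : ENNReal.ofReal y ≤ ρ (Set.Iic b) := by
        have hseq : ∀ n : ℕ, ENNReal.ofReal y ≤ ρ (Set.Iio (b + 1/(n+1))) := by
          intro n
          obtain ⟨t, htS, htlt⟩ := exists_lt_of_csInf_lt hne
            (show b < b + 1/(n+1) by
              have : (0:ℝ) < 1/(n+1) := by positivity
              linarith)
          have h2 : ENNReal.ofReal y ≤ ρ (Set.Iio t) := by
            have : y ≤ G t := (Set.mem_setOf_eq ▸ htS).le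
            calc ENNReal.ofReal y ≤ ENNReal.ofReal (G t) := ENNReal.ofReal_le_ofReal this
              _ = ρ (Set.Iio t) := ENNReal.ofReal_toReal (measure_ne_top _ _)
          exact h2.trans (measure_mono (Set.Iio_subset_Iio htlt.le))
        have hiInter : ⋂ n : ℕ, Set.Iio (b + 1/(n+1)) = Set.Iic b := by
          ext t
          simp only [Set.mem_iInter, Set.mem_Iio, Set.mem_Iic]
          constructor
          · intro h
            by_contra hbt
            push_neg at hbt
            obtain ⟨n, hn⟩ := exists_nat_one_div_lt (show (0:ℝ) < t - b by linarith)
            have := h n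
            linarith
          · intro h n
            have : (0:ℝ) < 1/(n+1) := by positivity
            linarith
        have htend : Tendsto (fun n : ℕ => ρ (Set.Iio (b + 1/(n+1)))) atTop
            (nhds (ρ (⋂ n : ℕ, Set.Iio (b + 1/(n+1))))) := by
          apply tendsto_measure_iInter_atTop
          · exact fun n => measurableSet_Iio.nullMeasurableSet
          · intro n m hnm
            apply Set.Iio_subset_Iio
            have h1 : (1:ℝ)/(m+1) ≤ 1/(n+1) := by
              apply one_div_le_one_div_of_le
              · positivity
              · have hcast : (n:ℝ) ≤ m := Nat.cast_le.mpr hnm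
                linarith
            linarith
          · exact ⟨0, measure_ne_top _ _⟩
        rw [hiInter] at htend
        exact ge_of_tendsto' htend hseq |>.trans_eq rfl
      have hIicIio : ρ (Set.Iic b) = ρ (Set.Iio b) := by
        apply le_antisymm
        · calc ρ (Set.Iic b) = ρ (Set.Iio b ∪ {b}) := by rw [Set.Iio_union_right]
            _ ≤ ρ (Set.Iio b) + ρ {b} := measure_union_le _ _
            _ = ρ (Set.Iio b) := by rw [hatom b, add_zero]
        · exact measure_mono Set.Iio_subset_Iic_self
      calc ρ {a | y < G a} ≤ ρ (Set.Ici b) := measure_mono hS_up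
        _ = ρ Set.univ - ρ (Set.Iio b) := by
            rw [← Set.compl_Iio, measure_compl measurableSet_Iio (measure_ne_top _ _)]
        _ ≤ ρ Set.univ - ENNReal.ofReal y := by
            apply tsub_le_tsub_left
            rw [← hIicIio]; exact h1
        _ = ENNReal.ofReal A' - ENNReal.ofReal y := by rw [ENNReal.ofReal_toReal hfin]
        _ = ENNReal.ofReal (A' - y) := (ENNReal.ofReal_sub _ hy.le).symm
    · rw [Set.not_nonempty_iff_eq_empty.mp hne]
      simp
  -- bound by the indicator function
  have hbound : ∀ y ∈ Set.Ioi (0:ℝ), ρ {a | y < G a} * ENNReal.ofReal (y ^ (c - 1 - 1)) ≤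
      (Set.Ioo 0 A').indicator (fun y => ENNReal.ofReal ((A' - y) * y ^ (c-2))) y := by
    intro y hy
    have hy0 : (0:ℝ) < y := hy
    by_cases hyA : y < A'
    · rw [Set.indicator_of_mem (Set.mem_Ioo.mpr ⟨hy0, hyA⟩), ENNReal.ofReal_mul (by linarith : (0:ℝ) ≤ A' - y)]
      have : c - 1 - 1 = c - 2 := by ring
      rw [this]
      exact mul_le_mul_left (hub y hy0) _
    · rw [Set.indicator_of_notMem (fun h => hyA h.2)]
      have hempty : {a : ℝ | y < G a} = ∅ := by
        ext t
        simp only [Set.mem_setOf_eq, Set.mem_empty_iff_false, iff_false, not_lt]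
        push_neg at hyA
        exact (hGle t).trans hyA
      simp [hempty]
  -- integrate the bound
  have hstep2 : ∫⁻ y in Set.Ioi 0, ρ {a | y < G a} * ENNReal.ofReal (y ^ (c - 1 - 1)) ≤
      ∫⁻ y in Set.Ioo 0 A', ENNReal.ofReal ((A' - y) * y ^ (c-2)) := by
    calc ∫⁻ y in Set.Ioi 0, ρ {a | y < G a} * ENNReal.ofReal (y ^ (c - 1 - 1))
        ≤ ∫⁻ y in Set.Ioi 0,
            (Set.Ioo 0 A').indicator (fun y => ENNReal.ofReal ((A' - y) * y ^ (c-2))) y :=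
          setLIntegral_mono' measurableSet_Ioi hbound
      _ = ∫⁻ y in Set.Ioo 0 A', ENNReal.ofReal ((A' - y) * y ^ (c-2)) := by
          rw [lintegral_indicator measurableSet_Ioo, Measure.restrict_restrict measurableSet_Ioo,
            Set.inter_eq_left.mpr (fun x hx => hx.1)]
  -- compute the real integral
  have hInt1 : IntervalIntegrable (fun y : ℝ => y ^ (c-2)) volume 0 A' :=
    intervalIntegral.intervalIntegrable_rpow' (by linarith)
  have hInt2 : IntervalIntegrable (fun y : ℝ => y ^ (c-1)) volume 0 A' :=
    intervalIntegral.intervalIntegrable_rpow' (by linarith)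
  have hIoo : IntegrableOn (fun y : ℝ => A' * y ^ (c-2) - y ^ (c-1)) (Set.Ioo 0 A') volume := by
    have h1 : IntegrableOn (fun y : ℝ => A' * y ^ (c-2) - y ^ (c-1)) (Set.Ioc 0 A') volume := by
      have := (hInt1.const_mul A').sub hInt2
      rw [intervalIntegrable_iff_integrableOn_Ioc_of_le hA'pos.le] at this
      exact this
    exact h1.mono_set Set.Ioo_subset_Ioc_self
  have hcongr : ∀ y ∈ Set.Ioo (0:ℝ) A', (A' - y) * y ^ (c-2) = A' * y ^ (c-2) - y ^ (c-1) := by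
    intro y hy
    have hy0 : (0:ℝ) < y := hy.1
    have : y ^ (c-1) = y * y ^ (c-2) := by
      have := Real.rpow_add hy0 1 (c-2)
      rw [show (1:ℝ) + (c-2) = c - 1 by ring, Real.rpow_one] at this
      exact this
    rw [this]; ring
  have hval : ∫ y in Set.Ioo 0 A', (A' - y) * y ^ (c-2) =
      A' ^ c * (1/(c-1) - 1/c) := by
    rw [setIntegral_congr_fun measurableSet_Ioo hcongr]
    rw [← MeasureTheory.integral_Ioc_eq_integral_Ioo,
      ← intervalIntegral.integral_of_le hA'pos.le,
      intervalIntegral.integral_sub (hInt1.const_mul A') hInt2,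
      intervalIntegral.integral_const_mul,
      integral_rpow (Or.inl (by linarith : (-1:ℝ) < c - 2)),
      integral_rpow (Or.inl (by linarith : (-1:ℝ) < c - 1))]
    have h0a : (0:ℝ) ^ (c - 2 + 1) = 0 := Real.zero_rpow (by intro h; linarith)
    have h0b : (0:ℝ) ^ (c - 1 + 1) = 0 := Real.zero_rpow (by intro h; linarith)
    rw [h0a, h0b, sub_zero, sub_zero]
    have e1 : c - 2 + 1 = c - 1 := by ring
    have e2 : c - 1 + 1 = c := by ring
    rw [e1, e2]
    have hApow : A' * A' ^ (c-1) = A' ^ c := by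
      have := Real.rpow_add hA'pos 1 (c-1)
      rw [show (1:ℝ) + (c-1) = c by ring, Real.rpow_one] at this
      exact this.symm
    rw [show A' * (A' ^ (c-1)/(c-1)) = (A' * A' ^ (c-1))/(c-1) from (mul_div_assoc _ _ _).symm,
      hApow]
    ring
  -- put it all together
  have hnn : (0 : ℝ → ℝ) ≤ᵐ[volume.restrict (Set.Ioo 0 A')] fun y => (A' - y) * y ^ (c-2) := by
    filter_upwards [self_mem_ae_restrict measurableSet_Ioo] with y hy
    have h1 : (0:ℝ) ≤ A' - y := by linarith [hy.2]
    exact mul_nonneg h1 (Real.rpow_nonneg hy.1.le _)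
  have hIoo' : IntegrableOn (fun y : ℝ => (A' - y) * y ^ (c-2)) (Set.Ioo 0 A') volume :=
    hIoo.congr_fun (fun y hy => (hcongr y hy).symm) measurableSet_Ioo
  have hstep3 : ∫⁻ y in Set.Ioo 0 A', ENNReal.ofReal ((A' - y) * y ^ (c-2)) =
      ENNReal.ofReal (A' ^ c * (1/(c-1) - 1/c)) := by
    rw [← MeasureTheory.ofReal_integral_eq_lintegral_ofReal hIoo' hnn, hval]
  calc ENNReal.ofReal c * ∫⁻ t, (ρ (Set.Iio t)) ^ (c - 1) ∂ρ
      = ENNReal.ofReal c * ∫⁻ t, ENNReal.ofReal (G t ^ (c - 1)) ∂ρ := by rw [step1]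
    _ = ENNReal.ofReal c * (ENNReal.ofReal (c-1) *
          ∫⁻ y in Set.Ioi 0, ρ {a | y < G a} * ENNReal.ofReal (y ^ (c - 1 - 1))) := by rw [key]
    _ ≤ ENNReal.ofReal c * (ENNReal.ofReal (c-1) *
          ENNReal.ofReal (A' ^ c * (1/(c-1) - 1/c))) := by
        apply mul_le_mul_right
        apply mul_le_mul_right
        rw [← hstep3]
        exact hstep2
    _ = ENNReal.ofReal (c * ((c-1) * (A' ^ c * (1/(c-1) - 1/c)))) := by
        rw [ENNReal.ofReal_mul (by linarith : (0:ℝ) ≤ c),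
          ENNReal.ofReal_mul (by linarith : (0:ℝ) ≤ c - 1)]
    _ = ENNReal.ofReal (A' ^ c) := by
        congr 1
        have h1 : c - 1 ≠ 0 := by linarith
        have h2 : c ≠ 0 := by linarith
        field_simp
        ring
    _ = (ρ Set.univ) ^ c := by
        rw [← ENNReal.ofReal_rpow_of_pos hA'pos, ENNReal.ofReal_toReal hfin]

open Filter in
private lemma lemA {v : ℝ → ℝ≥0∞}
    (hv : ∀ ⦃a b : ℝ⦄, 0 < a → a ≤ b → v b ≤ v a)
    {sr : ℝ} (hsr : 1 ≤ sr) {t : ℝ} (ht : 0 < t) :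
    (ENNReal.ofReal t * v t) ^ sr ≤
      ENNReal.ofReal sr *
        ∫⁻ τ in Set.Ioo 0 t, (ENNReal.ofReal τ * v τ) ^ sr / ENNReal.ofReal τ := by
  have hsr0 : (0:ℝ) < sr := lt_of_lt_of_le one_pos hsr
  have hmeas : Measurable fun τ : ℝ => ENNReal.ofReal (τ ^ (sr - 1)) :=
    (Real.continuous_rpow_const (by linarith)).measurable.ennreal_ofReal
  have hlow : ∀ τ ∈ Set.Ioo (0:ℝ) t,
      v t ^ sr * ENNReal.ofReal (τ ^ (sr - 1)) ≤
        (ENNReal.ofReal τ * v τ) ^ sr / ENNReal.ofReal τ := by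
    intro τ hτ
    have hτ0 : (0:ℝ) < τ := hτ.1
    have hτne : ENNReal.ofReal τ ≠ 0 := by simp [hτ0]
    have hτnetop : ENNReal.ofReal τ ≠ ∞ := ENNReal.ofReal_ne_top
    have h1 : (ENNReal.ofReal τ * v t) ^ sr ≤ (ENNReal.ofReal τ * v τ) ^ sr :=
      ENNReal.rpow_le_rpow (mul_le_mul_right (hv hτ0 hτ.2.le) _) hsr0.le
    have hq : τ ^ sr / τ = τ ^ (sr - 1) := by
      rw [Real.rpow_sub hτ0, Real.rpow_one]
    have e : (ENNReal.ofReal τ * v t) ^ sr / ENNReal.ofReal τ =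
        v t ^ sr * ENNReal.ofReal (τ ^ (sr - 1)) := by
      rw [ENNReal.mul_rpow_of_nonneg _ _ hsr0.le, ENNReal.ofReal_rpow_of_pos hτ0,
        mul_comm (ENNReal.ofReal (τ ^ sr)), mul_div_assoc, ← ENNReal.ofReal_div_of_pos hτ0, hq]
    rw [← e]
    exact ENNReal.div_le_div_right h1 _
  have hIcc : IntegrableOn (fun τ : ℝ => τ ^ (sr - 1)) (Set.Ioo 0 t) volume := by
    have h := intervalIntegral.intervalIntegrable_rpow' (show (-1:ℝ) < sr - 1 by linarith)
      (a := 0) (b := t)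
    rw [intervalIntegrable_iff_integrableOn_Ioc_of_le ht.le] at h
    exact h.mono_set Set.Ioo_subset_Ioc_self
  have hnn : (0 : ℝ → ℝ) ≤ᵐ[volume.restrict (Set.Ioo 0 t)] fun τ => τ ^ (sr - 1) := by
    filter_upwards [self_mem_ae_restrict measurableSet_Ioo] with y hy
    exact Real.rpow_nonneg hy.1.le _
  have hintval : ∫⁻ τ in Set.Ioo 0 t, ENNReal.ofReal (τ ^ (sr - 1)) =
      ENNReal.ofReal (t ^ sr / sr) := by
    rw [← MeasureTheory.ofReal_integral_eq_lintegral_ofReal hIcc hnn]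
    congr 1
    rw [← MeasureTheory.integral_Ioc_eq_integral_Ioo, ← intervalIntegral.integral_of_le ht.le,
      integral_rpow (Or.inl (by linarith : (-1:ℝ) < sr - 1))]
    rw [Real.zero_rpow (by intro h; linarith : sr - 1 + 1 ≠ 0), show sr - 1 + 1 = sr by ring,
      sub_zero]
  have e : ENNReal.ofReal sr * (v t ^ sr * ENNReal.ofReal (t ^ sr / sr)) =
      (ENNReal.ofReal t * v t) ^ sr := by
    calc ENNReal.ofReal sr * (v t ^ sr * ENNReal.ofReal (t ^ sr / sr))
        = (ENNReal.ofReal sr * ENNReal.ofReal (t ^ sr / sr)) * v t ^ sr := by ring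
      _ = ENNReal.ofReal (sr * (t ^ sr / sr)) * v t ^ sr := by
          rw [ENNReal.ofReal_mul hsr0.le]
      _ = ENNReal.ofReal (t ^ sr) * v t ^ sr := by
          rw [mul_comm sr, div_mul_cancel₀ _ (ne_of_gt hsr0)]
      _ = (ENNReal.ofReal t) ^ sr * v t ^ sr := by rw [ENNReal.ofReal_rpow_of_pos ht]
      _ = (ENNReal.ofReal t * v t) ^ sr := (ENNReal.mul_rpow_of_nonneg _ _ hsr0.le).symm
  calc (ENNReal.ofReal t * v t) ^ sr
      = ENNReal.ofReal sr * (v t ^ sr * ENNReal.ofReal (t ^ sr / sr)) := e.symm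
    _ = ENNReal.ofReal sr * (v t ^ sr * ∫⁻ τ in Set.Ioo 0 t, ENNReal.ofReal (τ ^ (sr - 1))) := by
        rw [hintval]
    _ = ENNReal.ofReal sr *
          ∫⁻ τ in Set.Ioo 0 t, v t ^ sr * ENNReal.ofReal (τ ^ (sr - 1)) := by
        rw [lintegral_const_mul _ hmeas]
    _ ≤ ENNReal.ofReal sr *
          ∫⁻ τ in Set.Ioo 0 t, (ENNReal.ofReal τ * v τ) ^ sr / ENNReal.ofReal τ :=
        mul_le_mul_right (setLIntegral_mono' measurableSet_Ioo hlow) _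

open Filter in
private lemma lemStar {v : ℝ → ℝ≥0∞} (hv_meas : Measurable v)
    (hv : ∀ ⦃a b : ℝ⦄, 0 < a → a ≤ b → v b ≤ v a)
    {sr qr : ℝ} (hsr : 1 ≤ sr) (hq : sr ≤ qr) :
    ENNReal.ofReal qr * ∫⁻ t in Set.Ioi 0, (ENNReal.ofReal t * v t) ^ qr / ENNReal.ofReal t ≤
      (ENNReal.ofReal sr *
        ∫⁻ t in Set.Ioi 0, (ENNReal.ofReal t * v t) ^ sr / ENNReal.ofReal t) ^ (qr / sr) := by
  have hsr0 : (0:ℝ) < sr := lt_of_lt_of_le one_pos hsr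
  have hqr0 : (0:ℝ) < qr := lt_of_lt_of_le hsr0 hq
  set c : ℝ := qr / sr with hcdef
  have hc1 : 1 ≤ c := (one_le_div hsr0).mpr hq
  have hcsr : c * sr = qr := div_mul_cancel₀ qr (ne_of_gt hsr0)
  -- basic measurability
  have hinner_meas : Measurable fun τ : ℝ => (ENNReal.ofReal τ * v τ) ^ sr / ENNReal.ofReal τ :=
    ((ENNReal.continuous_rpow_const.measurable).comp
      (measurable_id.ennreal_ofReal.mul hv_meas)).div measurable_id.ennreal_ofReal
  have hinner_meas_q : Measurable fun τ : ℝ => (ENNReal.ofReal τ * v τ) ^ qr / ENNReal.ofReal τ :=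
    ((ENNReal.continuous_rpow_const.measurable).comp
      (measurable_id.ennreal_ofReal.mul hv_meas)).div measurable_id.ennreal_ofReal
  set dens : ℝ → ℝ≥0∞ :=
    fun τ => ENNReal.ofReal sr * ((ENNReal.ofReal τ * v τ) ^ sr / ENNReal.ofReal τ) with hdensdef
  have hdens_meas : Measurable dens := hinner_meas.const_mul _
  set ρ : Measure ℝ := (volume.restrict (Set.Ioi 0)).withDensity dens with hρdef
  have hA0 : ρ Set.univ = ENNReal.ofReal sr *
      ∫⁻ t in Set.Ioi 0, (ENNReal.ofReal t * v t) ^ sr / ENNReal.ofReal t := by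
    rw [hρdef, withDensity_apply _ MeasurableSet.univ, Measure.restrict_univ]
    exact lintegral_const_mul _ hinner_meas
  by_cases hAtop : ρ Set.univ = ∞
  · rw [← hA0, hAtop, ENNReal.top_rpow_of_pos (by positivity)]
    exact le_top
  have hfin : IsFiniteMeasure ρ := ⟨Ne.lt_top hAtop⟩
  have habs : ρ ≪ volume.restrict (Set.Ioi 0) := withDensity_absolutelyContinuous _ _
  have hatom : ∀ x : ℝ, ρ {x} = 0 := by
    intro x
    apply habs
    rw [Measure.restrict_apply (measurableSet_singleton x)]
    exact measure_mono_null Set.inter_subset_left (Real.volume_singleton)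
  have hsupp : ρ (Set.Iic 0) = 0 := by
    apply habs
    rw [Measure.restrict_apply measurableSet_Iic]
    have : Set.Iic (0:ℝ) ∩ Set.Ioi 0 = ∅ := by
      ext x; simp only [Set.mem_inter_iff, Set.mem_Iic, Set.mem_Ioi, Set.mem_empty_iff_false,
        iff_false, not_and, not_lt]
      exact fun h => h
    rw [this, measure_empty]
  -- the CDF dominates the integrand
  have hG : ∀ t : ℝ, 0 < t → (ENNReal.ofReal t * v t) ^ sr ≤ ρ (Set.Iio t) := by
    intro t ht
    have h2 : ρ (Set.Iio t) = ENNReal.ofReal sr *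
        ∫⁻ τ in Set.Ioo 0 t, (ENNReal.ofReal τ * v τ) ^ sr / ENNReal.ofReal τ := by
      rw [hρdef, withDensity_apply _ measurableSet_Iio,
        Measure.restrict_restrict measurableSet_Iio, Set.Iio_inter_Ioi]
      exact lintegral_const_mul _ hinner_meas
    rw [h2]
    exact lemA hv hsr ht
  -- pointwise identity
  have hpt : ∀ t : ℝ, 0 < t →
      ENNReal.ofReal qr * ((ENNReal.ofReal t * v t) ^ qr / ENNReal.ofReal t) =
        ENNReal.ofReal c * ((ENNReal.ofReal t * v t) ^ sr) ^ (c - 1) * dens t := by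
    intro t ht
    have e1 : ((ENNReal.ofReal t * v t) ^ sr) ^ (c - 1) * (ENNReal.ofReal t * v t) ^ sr =
        (ENNReal.ofReal t * v t) ^ qr := by
      rw [← ENNReal.rpow_mul, ← ENNReal.rpow_add_of_nonneg _ _
        (mul_nonneg hsr0.le (by linarith)) hsr0.le]
      congr 1
      rw [← hcsr]; ring
    have e2 : ENNReal.ofReal c * ENNReal.ofReal sr = ENNReal.ofReal qr := by
      rw [← ENNReal.ofReal_mul (by positivity), hcsr]
    rw [hdensdef]
    simp only [div_eq_mul_inv]
    rw [← e2, ← e1]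
    ring
  -- putting things together
  calc ENNReal.ofReal qr * ∫⁻ t in Set.Ioi 0, (ENNReal.ofReal t * v t) ^ qr / ENNReal.ofReal t
      = ∫⁻ t in Set.Ioi 0,
          ENNReal.ofReal qr * ((ENNReal.ofReal t * v t) ^ qr / ENNReal.ofReal t) :=
        (lintegral_const_mul _ hinner_meas_q).symm
    _ = ∫⁻ t in Set.Ioi 0,
          ENNReal.ofReal c * ((ENNReal.ofReal t * v t) ^ sr) ^ (c - 1) * dens t := by
        apply setLIntegral_congr_fun measurableSet_Ioi
        exact fun t ht => hpt t ht
    _ ≤ ∫⁻ t in Set.Ioi 0, ENNReal.ofReal c * (ρ (Set.Iio t)) ^ (c - 1) * dens t := by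
        apply setLIntegral_mono' measurableSet_Ioi
        intro t ht
        exact mul_le_mul_left (mul_le_mul_right
          (ENNReal.rpow_le_rpow (hG t ht) (by linarith)) _) _
    _ = ENNReal.ofReal c * ∫⁻ t in Set.Ioi 0, (ρ (Set.Iio t)) ^ (c - 1) * dens t := by
        simp_rw [mul_assoc]
        refine lintegral_const_mul _ ?_
        refine Measurable.mul ?_ hdens_meas
        exact (ENNReal.continuous_rpow_const.measurable).comp
          ((Monotone.measurable (fun a b hab => measure_mono (Set.Iio_subset_Iio hab))))
    _ = ENNReal.ofReal c * ∫⁻ t, (ρ (Set.Iio t)) ^ (c - 1) ∂ρ := by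
        congr 1
        rw [hρdef, lintegral_withDensity_eq_lintegral_mul _ hdens_meas]
        · simp_rw [Pi.mul_apply, mul_comm]
        · exact (ENNReal.continuous_rpow_const.measurable).comp
            ((Monotone.measurable (fun a b hab => measure_mono (Set.Iio_subset_Iio hab))))
    _ ≤ (ρ Set.univ) ^ c := lemC ρ hatom hsupp hc1
    _ = (ENNReal.ofReal sr *
        ∫⁻ t in Set.Ioi 0, (ENNReal.ofReal t * v t) ^ sr / ENNReal.ofReal t) ^ c := by
        rw [hA0]

/-- If `(μ(φ⁻¹(B)))^{1/p} ≤ K (ν B)^{1/r}` for every measurable set `B`,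
then `‖f ∘ φ‖_{p,q} ≤ K ‖f‖_{r,s}` for every `f ∈ L_{r,s}(Y)` (where `s ≤ q`). -/
theorem compositionBound_of_measure_preimage_le
    {X Y : Type*} [MeasurableSpace X] [MeasurableSpace Y]
    (μ : Measure X) (ν : Measure Y) [SigmaFinite μ] [SigmaFinite ν]
    (φ : X → Y) (hφ : Measurable φ)
    (p r : ℝ) (hp : 1 < p) (hr : 1 < r)
    (s q : ℝ≥0∞) (hs : 1 ≤ s) (hsq : s ≤ q)
    (K : ℝ≥0)
    (hK : ∀ B : Set Y, MeasurableSet B →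
      (μ (φ ⁻¹' B)) ^ (1 / p) ≤ (K : ℝ≥0∞) * (ν B) ^ (1 / r)) :
    ∀ f : Y → ℂ, MemLorentz ν r s f →
      lorentzNorm μ p q (f ∘ φ) ≤ (K : ℝ≥0∞) * lorentzNorm ν r s f := by
  intro f hf
  obtain ⟨hfm, _⟩ := hf
  set d : ℝ → ℝ≥0∞ := distribFn ν f with hddef
  set v : ℝ → ℝ≥0∞ := fun t => d t ^ (1 / r) with hvdef
  have hd_anti : Antitone d := by
    intro a b hab
    apply measure_mono
    intro y hy
    simp only [Set.mem_setOf_eq] at hy ⊢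
    exact lt_of_le_of_lt hab hy
  have hd_meas : Measurable d := hd_anti.measurable
  have hv_meas : Measurable v :=
    (ENNReal.continuous_rpow_const.measurable).comp hd_meas
  have hv : ∀ ⦃a b : ℝ⦄, 0 < a → a ≤ b → v b ≤ v a := by
    intro a b _ hab
    exact ENNReal.rpow_le_rpow (hd_anti hab) (by positivity)
  have hBmeas : ∀ t : ℝ, MeasurableSet {y | t < ‖f y‖} := fun t =>
    measurableSet_lt measurable_const (continuous_norm.measurable.comp hfm)
  have hpoint : ∀ t : ℝ,
      ENNReal.ofReal t * (distribFn μ (f ∘ φ) t) ^ (1 / p) ≤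
        (K : ℝ≥0∞) * (ENNReal.ofReal t * v t) := by
    intro t
    have hDeq : distribFn μ (f ∘ φ) t = μ (φ ⁻¹' {y | t < ‖f y‖}) := rfl
    calc ENNReal.ofReal t * (distribFn μ (f ∘ φ) t) ^ (1 / p)
        ≤ ENNReal.ofReal t * ((K : ℝ≥0∞) * (d t) ^ (1 / r)) := by
          apply mul_le_mul_right
          rw [hDeq]
          exact hK _ (hBmeas t)
      _ = (K : ℝ≥0∞) * (ENNReal.ofReal t * v t) := by rw [hvdef]; ring
  by_cases hqtop : q = ∞
  · -- sup case
    rw [lorentzNorm, if_pos hqtop]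
    apply iSup₂_le
    intro lam hlam
    have hlam0 : (0:ℝ) < lam := hlam
    by_cases hstop : s = ∞
    · rw [lorentzNorm, if_pos hstop]
      refine (hpoint lam).trans (mul_le_mul_right ?_ _)
      exact le_iSup₂ (f := fun (l : ℝ) (_ : l ∈ Set.Ioi (0:ℝ)) =>
        ENNReal.ofReal l * (distribFn ν f l) ^ (1 / r)) lam hlam
    · -- s finite : use lemA
      set sr : ℝ := s.toReal with hsrdef
      have hsr1 : 1 ≤ sr := by
        rw [hsrdef, ← ENNReal.toReal_one]
        exact ENNReal.toReal_mono hstop hs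
      have hsr0 : (0:ℝ) < sr := by linarith
      have hsofReal : ENNReal.ofReal sr = s := ENNReal.ofReal_toReal hstop
      refine (hpoint lam).trans (mul_le_mul_right ?_ _)
      have h1 : ENNReal.ofReal lam * v lam =
          ((ENNReal.ofReal lam * v lam) ^ sr) ^ (1/sr) := by
        rw [← ENNReal.rpow_mul, mul_one_div_cancel (ne_of_gt hsr0), ENNReal.rpow_one]
      have hnorm : lorentzNorm ν r s f = (ENNReal.ofReal sr *
          ∫⁻ t in Set.Ioi (0:ℝ),
            (ENNReal.ofReal t * v t) ^ sr / ENNReal.ofReal t) ^ (1/sr) := by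
        rw [lorentzNorm, if_neg hstop, hsofReal]
      rw [h1, hnorm]
      apply ENNReal.rpow_le_rpow _ (by positivity)
      refine (lemA hv hsr1 hlam0).trans (mul_le_mul_right ?_ _)
      exact lintegral_mono_set Set.Ioo_subset_Ioi_self
  · -- integral case
    have hstop : s ≠ ∞ := fun h => hqtop (top_le_iff.mp (h ▸ hsq))
    set sr : ℝ := s.toReal with hsrdef
    set qr : ℝ := q.toReal with hqrdef
    have hsr1 : 1 ≤ sr := by
      rw [hsrdef, ← ENNReal.toReal_one]
      exact ENNReal.toReal_mono hstop hs
    have hsrqr : sr ≤ qr := ENNReal.toReal_mono hqtop hsq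
    have hqr0 : (0:ℝ) < qr := by linarith
    have hsr0 : (0:ℝ) < sr := by linarith
    have hsofReal : ENNReal.ofReal sr = s := ENNReal.ofReal_toReal hstop
    have hqofReal : ENNReal.ofReal qr = q := ENNReal.ofReal_toReal hqtop
    have hKtop : ((K : ℝ≥0∞)) ^ qr ≠ ∞ := ENNReal.rpow_ne_top_of_nonneg hqr0.le coe_ne_top
    set I : ℝ≥0∞ := ∫⁻ lam in Set.Ioi (0:ℝ),
      (ENNReal.ofReal lam * (distribFn μ (f ∘ φ) lam) ^ (1 / p)) ^ qr / ENNReal.ofReal lam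
      with hIdef
    set J : ℝ≥0∞ := ∫⁻ lam in Set.Ioi (0:ℝ),
      (ENNReal.ofReal lam * v lam) ^ qr / ENNReal.ofReal lam with hJdef
    set Js : ℝ≥0∞ := ∫⁻ lam in Set.Ioi (0:ℝ),
      (ENNReal.ofReal lam * v lam) ^ sr / ENNReal.ofReal lam with hJsdef
    have hIJ : I ≤ ((K : ℝ≥0∞)) ^ qr * J := by
      rw [hIdef, hJdef, ← lintegral_const_mul' _ _ hKtop]
      apply lintegral_mono
      intro t
      dsimp only
      rw [← mul_div_assoc, ← ENNReal.mul_rpow_of_nonneg _ _ hqr0.le]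
      exact ENNReal.div_le_div_right
        (ENNReal.rpow_le_rpow (hpoint t) hqr0.le) _
    have hstar : ENNReal.ofReal qr * J ≤ (ENNReal.ofReal sr * Js) ^ (qr / sr) :=
      lemStar hv_meas hv hsr1 hsrqr
    calc lorentzNorm μ p q (f ∘ φ) = (q * I) ^ (1/qr) := by
          rw [lorentzNorm, if_neg hqtop]
      _ ≤ (((K : ℝ≥0∞)) ^ qr * ((ENNReal.ofReal sr * Js) ^ (qr/sr))) ^ (1/qr) := by
          apply ENNReal.rpow_le_rpow _ (by positivity)
          calc q * I ≤ q * (((K : ℝ≥0∞)) ^ qr * J) := mul_le_mul_right hIJ _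
            _ = ((K : ℝ≥0∞)) ^ qr * (q * J) := by ring
            _ = ((K : ℝ≥0∞)) ^ qr * (ENNReal.ofReal qr * J) := by rw [hqofReal]
            _ ≤ ((K : ℝ≥0∞)) ^ qr * ((ENNReal.ofReal sr * Js) ^ (qr/sr)) :=
                mul_le_mul_right hstar _
      _ = (K : ℝ≥0∞) * lorentzNorm ν r s f := by
          rw [ENNReal.mul_rpow_of_nonneg _ _ (by positivity), ← ENNReal.rpow_mul,
            ← ENNReal.rpow_mul, mul_one_div_cancel (ne_of_gt hqr0), ENNReal.rpow_one,
            show qr / sr * (1 / qr) = 1 / sr by field_simp,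
            lorentzNorm, if_neg hstop, hsofReal]
end

section
/- Let φ : X → Y be a measurable mapping between σ-finite measure spaces, 1 < p < ∞, 1 ≤ q < ∞, and suppose the composition operator C_φ : L_{p,q}(Y, 𝓑, ν) → L_{p,q}(X, 𝒜, μ) is surjective. Then for every set A ∈ 𝒜 with μ(A) < ∞ there exists B ∈ 𝓑 such that A = φ⁻¹(B) up to a μ-null set; consequently, every set of 𝒜 of finite measure belongs (modulo μ-null sets) to the σ-algebra φ⁻¹(𝓑) = {φ⁻¹(B) : B ∈ 𝓑}. -/
open MeasureTheory Set ENNReal NNReal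

/-- If the composition operator `C_φ : L_{p,q}(Y) → L_{p,q}(X)` is
surjective (on a.e.-equivalence classes), then every `A ∈ 𝒜` with `μ(A) < ∞` coincides,
up to a `μ`-null set, with `φ⁻¹(B)` for some `B ∈ 𝓑`. -/
theorem preimage_sigmaAlgebra_of_surjective
    {X Y : Type*} [MeasurableSpace X] [MeasurableSpace Y]
    (μ : Measure X) (ν : Measure Y) [SigmaFinite μ] [SigmaFinite ν]
    (φ : X → Y) (hφ : Measurable φ)
    (p : ℝ) (hp : 1 < p) (q : ℝ≥0∞) (hq : 1 ≤ q) (hq' : q ≠ ∞)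
    (hsurj : ∀ h : X → ℂ, MemLorentz μ p q h →
      ∃ f : Y → ℂ, MemLorentz ν p q f ∧ h =ᵐ[μ] (f ∘ φ)) :
    ∀ A : Set X, MeasurableSet A → μ A < ∞ →
      ∃ B : Set Y, MeasurableSet B ∧ μ (symmDiff A (φ ⁻¹' B)) = 0 := by
  intro A hA hAfin
  set h : X → ℂ := A.indicator (fun _ => 1) with hh
  have hmeas : Measurable h := measurable_const.indicator hA
  have hp0 : (0:ℝ) < 1 / p := by
    apply one_div_pos.mpr; linarith
  have hqr : 1 ≤ q.toReal := by
    rw [← ENNReal.toReal_one]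
    exact ENNReal.toReal_mono hq' hq
  have hqr0 : (0:ℝ) < q.toReal := lt_of_lt_of_le one_pos hqr
  -- distribution function facts
  have hd_le : ∀ lam : ℝ, 0 < lam → distribFn μ h lam ≤ μ A := by
    intro lam hlam
    apply measure_mono
    intro x hx
    by_contra hxA
    simp only [hh, Set.indicator_of_notMem hxA, mem_setOf_eq, norm_zero] at hx
    linarith
  have hd_zero : ∀ lam : ℝ, 1 ≤ lam → distribFn μ h lam = 0 := by
    intro lam hlam
    have : {x | lam < ‖h x‖} = ∅ := by
      ext x
      simp only [mem_setOf_eq, mem_empty_iff_false, iff_false, not_lt]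
      by_cases hxA : x ∈ A
      · simp [hh, Set.indicator_of_mem hxA, hlam]
      · simp only [hh, Set.indicator_of_notMem hxA, norm_zero]
        linarith
    rw [distribFn, this, measure_empty]
  -- h belongs to the Lorentz space
  have hmem : MemLorentz μ p q h := by
    refine ⟨hmeas, ?_⟩
    rw [lorentzNorm, if_neg hq']
    set C : ℝ≥0∞ := ((μ A) ^ (1/p)) ^ q.toReal with hC
    have hCfin : C ≠ ∞ := by
      apply ENNReal.rpow_ne_top_of_nonneg hqr0.le
      exact ENNReal.rpow_ne_top_of_nonneg hp0.le hAfin.ne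
    have hint : (∫⁻ lam in Set.Ioi (0:ℝ),
        (ENNReal.ofReal lam * (distribFn μ h lam) ^ (1 / p)) ^ q.toReal /
          ENNReal.ofReal lam) ≤ C := by
      have hbound : ∀ lam ∈ Set.Ioi (0:ℝ),
          (ENNReal.ofReal lam * (distribFn μ h lam) ^ (1 / p)) ^ q.toReal /
            ENNReal.ofReal lam ≤ (Set.Ioo (0:ℝ) 1).indicator (fun _ => C) lam := by
        intro lam hlam
        simp only [Set.mem_Ioi] at hlam
        by_cases h1 : lam < 1
        · rw [Set.indicator_of_mem (show lam ∈ Set.Ioo (0:ℝ) 1 from ⟨hlam, h1⟩)]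
          have ha0 : ENNReal.ofReal lam ≠ 0 := by
            simp [ENNReal.ofReal_pos.mpr hlam |>.ne']
          have haT : ENNReal.ofReal lam ≠ ∞ := ENNReal.ofReal_ne_top
          have ha1 : ENNReal.ofReal lam ≤ 1 := ENNReal.ofReal_le_one.mpr h1.le
          calc (ENNReal.ofReal lam * (distribFn μ h lam) ^ (1 / p)) ^ q.toReal /
                ENNReal.ofReal lam
              ≤ (ENNReal.ofReal lam * (μ A) ^ (1 / p)) ^ q.toReal /
                ENNReal.ofReal lam := by
                gcongr
                exact hd_le lam hlam
            _ = (ENNReal.ofReal lam) ^ q.toReal * C / ENNReal.ofReal lam := by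
                rw [ENNReal.mul_rpow_of_nonneg _ _ hqr0.le, hC]
            _ ≤ ENNReal.ofReal lam * C / ENNReal.ofReal lam := by
                have hle : (ENNReal.ofReal lam) ^ q.toReal ≤ ENNReal.ofReal lam := by
                  simpa using ENNReal.rpow_le_rpow_of_exponent_ge ha1 hqr
                exact ENNReal.div_le_div (mul_le_mul_left hle C) le_rfl
            _ = C * (ENNReal.ofReal lam / ENNReal.ofReal lam) := by
                rw [mul_comm, mul_div_assoc]
            _ = C := by rw [ENNReal.div_self ha0 haT, mul_one]
        · have : distribFn μ h lam = 0 := hd_zero lam (by linarith)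
          rw [this, ENNReal.zero_rpow_of_pos hp0, mul_zero,
            ENNReal.zero_rpow_of_pos hqr0, ENNReal.zero_div]
          exact zero_le
      calc (∫⁻ lam in Set.Ioi (0:ℝ),
            (ENNReal.ofReal lam * (distribFn μ h lam) ^ (1 / p)) ^ q.toReal /
              ENNReal.ofReal lam)
          ≤ ∫⁻ lam in Set.Ioi (0:ℝ),
            (Set.Ioo (0:ℝ) 1).indicator (fun _ => C) lam :=
            setLIntegral_mono' measurableSet_Ioi hbound
        _ ≤ ∫⁻ lam, (Set.Ioo (0:ℝ) 1).indicator (fun _ => C) lam :=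
            setLIntegral_le_lintegral _ _
        _ = C * volume (Set.Ioo (0:ℝ) 1) := by
            rw [lintegral_indicator measurableSet_Ioo, setLIntegral_const]
        _ = C := by simp [Real.volume_Ioo]
    have hfin : q * (∫⁻ lam in Set.Ioi (0:ℝ),
        (ENNReal.ofReal lam * (distribFn μ h lam) ^ (1 / p)) ^ q.toReal /
          ENNReal.ofReal lam) ≠ ∞ :=
      ENNReal.mul_ne_top hq' (lt_of_le_of_lt hint hCfin.lt_top).ne
    exact ENNReal.rpow_lt_top_of_nonneg (by positivity) hfin
  -- apply surjectivity
  obtain ⟨f, hf, hae⟩ := hsurj h hmem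
  refine ⟨f ⁻¹' {1}, hf.1 (measurableSet_singleton 1), ?_⟩
  have hnull : μ {x | h x ≠ (f ∘ φ) x} = 0 := ae_iff.mp hae
  apply measure_mono_null _ hnull
  intro x hx
  simp only [Set.mem_symmDiff] at hx
  simp only [mem_setOf_eq, Function.comp_apply]
  rcases hx with ⟨hxA, hxB⟩ | ⟨hxB, hxA⟩
  · simp only [Set.mem_preimage, Set.mem_singleton_iff] at hxB
    simp only [hh, Set.indicator_of_mem hxA]
    exact fun hc => hxB hc.symm
  · simp only [Set.mem_preimage, Set.mem_singleton_iff] at hxB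
    simp [hh, Set.indicator_of_notMem hxA, hxB]
end
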